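/- arXiv:1807.04709 — 4 statements merged into one kernel-verified Lean document; each statement's English description precedes it below -/
import Mathlib

section
/- Let A be an invertible nonnegative n×n matrix with nonnegative inverse. If A_{ij} ≠ 0, then (A⁻¹)_{jk} = 0 for all k ≠ i. -/
/-- If `A` is an invertible nonnegative matrix with nonnegative inverse and `A i j ≠ 0`,
then `A⁻¹ j k = 0` for all `k ≠ i`. -/
theorem stmt_1 {n : ℕ} (A : Matrix (Fin n) (Fin n) ℝ)
    (hA : IsUnit A)
    (hpos : ∀ i j, 0 ≤ A i j)
    (hinv : ∀ i j, 0 ≤ A⁻¹ i j)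
    (i j : Fin n) (hij : A i j ≠ 0) :
    ∀ k, k ≠ i → A⁻¹ j k = 0 := by
  intro k hk
  have hmul : A * A⁻¹ = 1 := Matrix.mul_nonsing_inv A ((Matrix.isUnit_iff_isUnit_det A).mp hA)
  have hentry : ∑ m, A i m * A⁻¹ m k = 0 := by
    have := congrFun (congrFun hmul i) k
    simp [Matrix.mul_apply, Matrix.one_apply, hk.symm] at this
    simpa [Matrix.mul_apply] using this
  have hterm : A i j * A⁻¹ j k = 0 := by
    have := (Finset.sum_eq_zero_iff_of_nonneg (fun m _ => mul_nonneg (hpos i m) (hinv m k))).mp hentry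
    exact this j (Finset.mem_univ j)
  exact (mul_eq_zero.mp hterm).resolve_left hij
end

section
/- Let q : ℝⁿ → ℝⁿ be a twice continuously differentiable bijection whose inverse is also twice continuously differentiable, and suppose q is an order isomorphism for the componentwise order. Then for every z, the Jacobian of q at z is a nonnegative monomial matrix (invertible with exactly one nonzero, positive entry in each row and column). -/
/-- A monotone real function has nonnegative derivative. -/
lemma mono_hasDerivAt_nonneg {f : ℝ → ℝ} {x a : ℝ} (hf : Monotone f)
    (h : HasDerivAt f a x) : 0 ≤ a := by
  have ht := hasDerivAt_iff_tendsto_slope.mp h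
  refine ge_of_tendsto ht ?_
  filter_upwards [self_mem_nhdsWithin] with y hy
  have hy' : y ≠ x := hy
  rcases lt_or_gt_of_ne hy' with hlt | hgt
  · have h1 : f y - f x ≤ 0 := sub_nonpos.mpr (hf hlt.le)
    have h2 : y - x < 0 := sub_neg.mpr hlt
    rw [slope_def_field]
    have := div_nonneg (neg_nonneg.mpr h1) (neg_nonneg.mpr h2.le)
    rwa [neg_div_neg_eq] at this
  · have h1 : 0 ≤ f y - f x := sub_nonneg.mpr (hf hgt.le)
    have h2 : 0 ≤ y - x := sub_nonneg.mpr hgt.le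
    rw [slope_def_field]
    exact div_nonneg h1 h2

/-- The Jacobian of a differentiable monotone map has nonnegative action on
nonnegative vectors. -/
lemma fderiv_nonneg {n : ℕ} {f : (Fin n → ℝ) → (Fin n → ℝ)}
    (hf : Differentiable ℝ f) (hmono : Monotone f) (z v : Fin n → ℝ) (hv : 0 ≤ v)
    (i : Fin n) : 0 ≤ fderiv ℝ f z v i := by
  set F := fderiv ℝ f z with hF
  -- derivative of the line t ↦ z + t • v
  have hline : HasDerivAt (fun t : ℝ => z + t • v) v 0 := by
    have h1 : HasDerivAt (fun t : ℝ => t • v) ((1 : ℝ) • v) 0 :=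
      (hasDerivAt_id (0 : ℝ)).smul_const v
    simpa [one_smul] using h1.const_add z
  have hq : HasFDerivAt f F (z + (0 : ℝ) • v) := by
    simpa using (hf z).hasFDerivAt
  have hcomp : HasDerivAt (fun t : ℝ => f (z + t • v)) (F v) 0 :=
    hq.comp_hasDerivAt 0 hline
  have hcompi : HasDerivAt (fun t : ℝ => f (z + t • v) i) (F v i) 0 :=
    hasDerivAt_pi.mp hcomp i
  refine mono_hasDerivAt_nonneg ?_ hcompi
  intro s t hst
  have h1 : z + s • v ≤ z + t • v := by
    intro k
    simp only [Pi.add_apply, Pi.smul_apply, smul_eq_mul]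
    exact add_le_add le_rfl (mul_le_mul_of_nonneg_right hst (hv k))
  exact hmono h1 i

/-- A nonnegative matrix with nonnegative two-sided inverse has exactly one
nonzero entry in each row and each column. -/
lemma monomial_of_nonneg_inv {n : ℕ} {A B : Matrix (Fin n) (Fin n) ℝ}
    (hA : ∀ i j, 0 ≤ A i j) (hB : ∀ i j, 0 ≤ B i j)
    (h1 : A * B = 1) (h2 : B * A = 1) :
    (∀ i, ∃! j, A i j ≠ 0) ∧ (∀ j, ∃! i, A i j ≠ 0) := by
  constructor
  · intro i
    have hdiag : ∑ k, A i k * B k i = 1 := by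
      have := congrFun (congrFun h1 i) i
      simpa [Matrix.mul_apply, Matrix.one_apply] using this
    obtain ⟨k, -, hk⟩ : ∃ k ∈ Finset.univ, A i k * B k i ≠ 0 :=
      Finset.exists_ne_zero_of_sum_ne_zero (by rw [hdiag]; norm_num)
    have hAik : A i k ≠ 0 := fun h => hk (by simp [h])
    have hBki : 0 < B k i := lt_of_le_of_ne (hB k i) (by
      intro h; exact hk (by simp [← h]))
    refine ⟨k, hAik, ?_⟩
    intro j hj
    by_contra hne
    have hzero : ∑ m, B k m * A m j = 0 := by
      have := congrFun (congrFun h2 k) j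
      simpa [Matrix.mul_apply, Matrix.one_apply, Ne.symm hne] using this
    have hterm : B k i * A i j = 0 := by
      have := (Finset.sum_eq_zero_iff_of_nonneg
        (fun m _ => mul_nonneg (hB k m) (hA m j))).mp hzero i (Finset.mem_univ i)
      exact this
    have : 0 < B k i * A i j :=
      mul_pos hBki (lt_of_le_of_ne (hA i j) (Ne.symm hj))
    exact this.ne' hterm
  · intro j
    have hdiag : ∑ k, B j k * A k j = 1 := by
      have := congrFun (congrFun h2 j) j
      simpa [Matrix.mul_apply, Matrix.one_apply] using this
    obtain ⟨i, -, hi⟩ : ∃ i ∈ Finset.univ, B j i * A i j ≠ 0 :=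
      Finset.exists_ne_zero_of_sum_ne_zero (by rw [hdiag]; norm_num)
    have hAij : A i j ≠ 0 := fun h => hi (by simp [h])
    have hBji : 0 < B j i := lt_of_le_of_ne (hB j i) (by
      intro h; exact hi (by simp [← h]))
    refine ⟨i, hAij, ?_⟩
    intro i' hi'
    by_contra hne
    have hzero : ∑ k, A i' k * B k i = 0 := by
      have := congrFun (congrFun h1 i') i
      simpa [Matrix.mul_apply, Matrix.one_apply, hne] using this
    have hterm : A i' j * B j i = 0 := by
      exact (Finset.sum_eq_zero_iff_of_nonneg
        (fun m _ => mul_nonneg (hA i' m) (hB m i))).mp hzero j (Finset.mem_univ j)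
    have : 0 < A i' j * B j i :=
      mul_pos (lt_of_le_of_ne (hA i' j) (Ne.symm hi')) hBji
    exact this.ne' hterm

/-- If `q : ℝⁿ → ℝⁿ` is a twice continuously differentiable bijection with twice continuously
differentiable inverse which is an order isomorphism for the componentwise order, then the
Jacobian of `q` at every point is a nonnegative monomial matrix: it is invertible and has
exactly one nonzero, positive, entry in each row and in each column. -/
theorem stmt_4 {n : ℕ} (q : (Fin n → ℝ) → (Fin n → ℝ))
    (hbij : Function.Bijective q)
    (hq : ContDiff ℝ 2 q)
    (hq' : ContDiff ℝ 2 (Function.invFun q))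
    (hiso : ∀ u v : Fin n → ℝ, u ≤ v ↔ q u ≤ q v) :
    ∀ z : Fin n → ℝ,
      IsUnit (Matrix.of fun i j => fderiv ℝ q z (Pi.single j 1) i) ∧
      (∀ i, ∃! j, fderiv ℝ q z (Pi.single j 1) i ≠ 0) ∧
      (∀ j, ∃! i, fderiv ℝ q z (Pi.single j 1) i ≠ 0) ∧
      (∀ i j, fderiv ℝ q z (Pi.single j 1) i ≠ 0 → 0 < fderiv ℝ q z (Pi.single j 1) i) := by
  intro z
  set p := Function.invFun q with hp
  have hdq : Differentiable ℝ q := hq.differentiable two_ne_zero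
  have hdp : Differentiable ℝ p := hq'.differentiable two_ne_zero
  have hli : Function.LeftInverse p q := Function.leftInverse_invFun hbij.1
  have hri : Function.RightInverse p q := Function.rightInverse_invFun hbij.2
  -- q and p are monotone
  have hqmono : Monotone q := fun u v h => (hiso u v).mp h
  have hpmono : Monotone p := by
    intro u v h
    refine (hiso (p u) (p v)).mpr ?_
    rwa [hri u, hri v]
  set F : (Fin n → ℝ) →L[ℝ] (Fin n → ℝ) := fderiv ℝ q z with hF
  set G : (Fin n → ℝ) →L[ℝ] (Fin n → ℝ) := fderiv ℝ p (q z) with hG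
  -- chain rule : G ∘ F = id and F ∘ G = id
  have hGF : (G : (Fin n → ℝ) →ₗ[ℝ] (Fin n → ℝ)).comp (F : (Fin n → ℝ) →ₗ[ℝ] (Fin n → ℝ))
      = LinearMap.id := by
    have hcomp : fderiv ℝ (p ∘ q) z = G.comp F :=
      fderiv_comp z (hdp (q z)) (hdq z)
    have hid : p ∘ q = id := funext fun x => hli x
    rw [hid, fderiv_id] at hcomp
    rw [← ContinuousLinearMap.toLinearMap_comp, ← hcomp, ContinuousLinearMap.coe_id]
  have hFG : (F : (Fin n → ℝ) →ₗ[ℝ] (Fin n → ℝ)).comp (G : (Fin n → ℝ) →ₗ[ℝ] (Fin n → ℝ))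
      = LinearMap.id := by
    have hcomp : fderiv ℝ (q ∘ p) (q z) = (fderiv ℝ q (p (q z))).comp G :=
      fderiv_comp (q z) (hdq (p (q z))) (hdp (q z))
    rw [hli z] at hcomp
    have hid : q ∘ p = id := funext fun x => hri x
    rw [hid, fderiv_id] at hcomp
    rw [← ContinuousLinearMap.toLinearMap_comp, ← hcomp, ContinuousLinearMap.coe_id]
  -- matrices
  set A : Matrix (Fin n) (Fin n) ℝ :=
    LinearMap.toMatrix' (F : (Fin n → ℝ) →ₗ[ℝ] (Fin n → ℝ)) with hAdef
  set B : Matrix (Fin n) (Fin n) ℝ :=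
    LinearMap.toMatrix' (G : (Fin n → ℝ) →ₗ[ℝ] (Fin n → ℝ)) with hBdef
  have hsingle : ∀ j : Fin n, (fun j' => if j' = j then (1 : ℝ) else 0) = Pi.single j 1 := by
    intro j; funext k; simp [Pi.single_apply]
  have hAapp : ∀ i j, A i j = fderiv ℝ q z (Pi.single j 1) i := by
    intro i j; rw [hAdef, LinearMap.toMatrix'_apply]; rfl
  have hBapp : ∀ i j, B i j = fderiv ℝ p (q z) (Pi.single j 1) i := by
    intro i j; rw [hBdef, LinearMap.toMatrix'_apply]; rfl
  have hAB : A * B = 1 := by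
    rw [hAdef, hBdef, ← LinearMap.toMatrix'_comp, hFG, LinearMap.toMatrix'_id]
  have hBA : B * A = 1 := by
    rw [hAdef, hBdef, ← LinearMap.toMatrix'_comp, hGF, LinearMap.toMatrix'_id]
  have hAnn : ∀ i j, 0 ≤ A i j := by
    intro i j; rw [hAapp]
    exact fderiv_nonneg hdq hqmono z (Pi.single j 1) (by
      intro k; by_cases h : k = j <;> simp [Pi.single_apply, h]) i
  have hBnn : ∀ i j, 0 ≤ B i j := by
    intro i j; rw [hBapp]
    exact fderiv_nonneg hdp hpmono (q z) (Pi.single j 1) (by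
      intro k; by_cases h : k = j <;> simp [Pi.single_apply, h]) i
  have hmono := monomial_of_nonneg_inv hAnn hBnn hAB hBA
  have hMat : (Matrix.of fun i j => fderiv ℝ q z (Pi.single j 1) i) = A := by
    ext i j; exact (hAapp i j).symm
  refine ⟨?_, ?_, ?_, ?_⟩
  · rw [hMat]; exact ⟨⟨A, B, hAB, hBA⟩, rfl⟩
  · intro i
    obtain ⟨j, hj, huniq⟩ := hmono.1 i
    exact ⟨j, by rwa [hAapp] at hj, fun j' hj' => huniq j'
      (show A i j' ≠ 0 by rw [hAapp]; exact hj')⟩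
  · intro j
    obtain ⟨i, hi, huniq⟩ := hmono.2 j
    exact ⟨i, by rwa [hAapp] at hi, fun i' hi' => huniq i'
      (show A i' j ≠ 0 by rw [hAapp]; exact hi')⟩
  · intro i j h
    have := hAnn i j
    rw [hAapp] at this
    exact lt_of_le_of_ne this (Ne.symm h)
end

section
/- Let q : ℝ → ℝ be continuous and strictly monotone increasing, and let X be a real random variable such that q(X) has the same distribution as X. Then q(c) = c for every c in the support of the distribution of X. -/
open MeasureTheory Set

/-- If `q : ℝ → ℝ` is continuous and strictly increasing and preserves the law `μ` of a
random variable, then `q c = c` for every `c` in the support of `μ` (i.e. every point all of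
whose open neighborhoods have positive measure). -/
theorem stmt_8 (q : ℝ → ℝ) (hq : Continuous q) (hmono : StrictMono q)
    (μ : Measure ℝ) [IsProbabilityMeasure μ]
    (hpres : Measure.map q μ = μ)
    (c : ℝ) (hc : ∀ U : Set ℝ, IsOpen U → c ∈ U → 0 < μ U) :
    q c = c := by
  by_contra hne
  have hmeas := hq.measurable
  have key1 : ∀ a : ℝ, μ (Iio (q a)) = μ (Iio a) := by
    intro a
    conv_lhs => rw [← hpres]
    rw [Measure.map_apply hmeas measurableSet_Iio]
    congr 1
    ext y; simp [hmono.lt_iff_lt]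
  have key2 : ∀ a : ℝ, μ (Iic (q a)) = μ (Iic a) := by
    intro a
    conv_lhs => rw [← hpres]
    rw [Measure.map_apply hmeas measurableSet_Iic]
    congr 1
    ext y; simp [hmono.le_iff_le]
  rcases lt_or_gt_of_ne hne with hlt | hgt
  · -- q c < c : find a > c with q a < c
    have hm : {a | q a < c} ∈ nhds c := hq.continuousAt (Iio_mem_nhds hlt)
    obtain ⟨a, ha, hac⟩ : ∃ a, q a < c ∧ c < a := by
      rcases Metric.mem_nhds_iff.1 hm with ⟨ε, hε, hball⟩
      refine ⟨c + ε/2, hball ?_, by linarith⟩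
      simp only [Metric.mem_ball, Real.dist_eq]
      rw [show c + ε/2 - c = ε/2 by ring, abs_of_nonneg (by linarith)]
      linarith
    have h0 : μ (Ioc (q a) a) = 0 := by
      have he : Ioc (q a) a = Iic a \ Iic (q a) := by
        ext y; simp [Set.mem_Ioc, and_comm]
      rw [he, measure_diff (Iic_subset_Iic.2 (le_of_lt (ha.trans hac)))
        measurableSet_Iic.nullMeasurableSet (measure_ne_top μ _), key2, tsub_self]
    have hpos := hc (Ioo (q a) a) isOpen_Ioo ⟨ha, hac⟩
    exact absurd (measure_mono_null Ioo_subset_Ioc_self h0) hpos.ne'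
  · -- q c > c : find a < c with c < q a
    have hm : {a | c < q a} ∈ nhds c := hq.continuousAt (Ioi_mem_nhds hgt)
    obtain ⟨a, ha, hac⟩ : ∃ a, c < q a ∧ a < c := by
      rcases Metric.mem_nhds_iff.1 hm with ⟨ε, hε, hball⟩
      refine ⟨c - ε/2, hball ?_, by linarith⟩
      simp only [Metric.mem_ball, Real.dist_eq]
      rw [show c - ε/2 - c = -(ε/2) by ring, abs_neg, abs_of_nonneg (by linarith)]
      linarith
    have h0 : μ (Ico a (q a)) = 0 := by
      have he : Ico a (q a) = Iio (q a) \ Iio a := by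
        ext y; simp [Set.mem_Ico, and_comm]
      rw [he, measure_diff (Iio_subset_Iio (hac.trans ha).le)
        measurableSet_Iio.nullMeasurableSet (measure_ne_top μ _), key1, tsub_self]
    have hpos := hc (Ioo a (q a)) isOpen_Ioo ⟨hac, ha⟩
    exact absurd (measure_mono_null Ioo_subset_Ico_self h0) hpos.ne'
end

section
/- Let q : ℝⁿ → ℝⁿ be given by q(x)_i = g_i(x_{σ(i)}) for a permutation σ and continuous strictly increasing functions g_i, and let μ = μ₁ ⊗ ⋯ ⊗ μₙ be a product probability measure with each μ_i having full support on ℝ, all μ_i equal. If q pushes μ forward to μ, then each g_i is the identity, i.e., q is the coordinate permutation x ↦ (x_{σ(i)})_i. -/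
open MeasureTheory

/-- Marginal of a product probability measure. -/
lemma map_eval_pi' {n : ℕ} (ν : Fin n → Measure ℝ) [∀ i, IsProbabilityMeasure (ν i)]
    (i : Fin n) : Measure.map (Function.eval i) (Measure.pi ν) = ν i := by
  ext s hs
  rw [Measure.map_apply (measurable_pi_apply i) hs, Set.eval_preimage,
    Measure.pi_pi]
  rw [Finset.prod_eq_single i]
  · simp
  · intro j _ hj
    simp [Function.update_of_ne hj]
  · simp

/-- 1-dimensional rigidity: a strictly monotone map preserving a fully-supported
probability measure on `ℝ` is the identity. -/
lemma one_dim {g : ℝ → ℝ} (hmono : StrictMono g) (ν₀ : Measure ℝ)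
    [IsProbabilityMeasure ν₀]
    (hsupp : ∀ U : Set ℝ, IsOpen U → U.Nonempty → 0 < ν₀ U)
    (hmap : Measure.map g ν₀ = ν₀) (a : ℝ) : g a = a := by
  have hgm : Measurable g := hmono.monotone.measurable
  have key : ν₀ (Set.Iic (g a)) = ν₀ (Set.Iic a) := by
    conv_lhs => rw [← hmap]
    rw [Measure.map_apply hgm measurableSet_Iic]
    congr 1
    ext y
    simp [hmono.le_iff_le]
  rcases lt_trichotomy (g a) a with h | h | h
  · have hpos : 0 < ν₀ (Set.Ioc (g a) a) :=
      lt_of_lt_of_le (hsupp _ isOpen_Ioo ⟨(g a + a) / 2, by constructor <;> linarith⟩)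
        (measure_mono Set.Ioo_subset_Ioc_self)
    have hunion : Set.Iic (g a) ∪ Set.Ioc (g a) a = Set.Iic a :=
      Set.Iic_union_Ioc_eq_Iic h.le
    have hadd : ν₀ (Set.Iic (g a)) + ν₀ (Set.Ioc (g a) a) = ν₀ (Set.Iic a) := by
      rw [← hunion, measure_union (Set.Iic_disjoint_Ioc le_rfl) measurableSet_Ioc]
    rw [key] at hadd
    have hfin : ν₀ (Set.Iic a) ≠ ⊤ := measure_ne_top _ _
    have : ν₀ (Set.Ioc (g a) a) = 0 :=
      (ENNReal.add_right_inj hfin).mp (by rw [hadd, add_zero])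
    exact absurd this hpos.ne'
  · exact h
  · have hpos : 0 < ν₀ (Set.Ioc a (g a)) :=
      lt_of_lt_of_le (hsupp _ isOpen_Ioo ⟨(a + g a) / 2, by constructor <;> linarith⟩)
        (measure_mono Set.Ioo_subset_Ioc_self)
    have hunion : Set.Iic a ∪ Set.Ioc a (g a) = Set.Iic (g a) :=
      Set.Iic_union_Ioc_eq_Iic h.le
    have hadd : ν₀ (Set.Iic a) + ν₀ (Set.Ioc a (g a)) = ν₀ (Set.Iic (g a)) := by
      rw [← hunion, measure_union (Set.Iic_disjoint_Ioc le_rfl) measurableSet_Ioc]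
    rw [key] at hadd
    have hfin : ν₀ (Set.Iic a) ≠ ⊤ := measure_ne_top _ _
    have : ν₀ (Set.Ioc a (g a)) = 0 :=
      (ENNReal.add_right_inj hfin).mp (by rw [hadd, add_zero])
    exact absurd this hpos.ne'

/-- If `q x i = g i (x (σ i))` with continuous strictly increasing `g i`, and `q` preserves
a product probability measure with identical fully supported factors, then each `g i` is the
identity and `q` is the coordinate permutation. -/
theorem stmt_18 {n : ℕ} (σ : Equiv.Perm (Fin n)) (g : Fin n → ℝ → ℝ)
    (hcont : ∀ i, Continuous (g i)) (hmono : ∀ i, StrictMono (g i))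
    (q : (Fin n → ℝ) → (Fin n → ℝ)) (hq : ∀ x i, q x i = g i (x (σ i)))
    (ν : Fin n → Measure ℝ) [∀ i, IsProbabilityMeasure (ν i)]
    (ν₀ : Measure ℝ) (hsame : ∀ i, ν i = ν₀)
    (hsupp : ∀ U : Set ℝ, IsOpen U → U.Nonempty → 0 < ν₀ U)
    (hpres : Measure.map q (Measure.pi ν) = Measure.pi ν) :
    (∀ i x, g i x = x) ∧ ∀ x, q x = fun i => x (σ i) := by
  have hqeq : q = fun x i => g i (x (σ i)) := by
    funext x i; exact hq x i
  have hqm : Measurable q := by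
    rw [hqeq]
    exact measurable_pi_lambda _ fun i => ((hcont i).measurable).comp (measurable_pi_apply _)
  have hid : ∀ i x, g i x = x := by
    intro i
    have hν₀ : IsProbabilityMeasure ν₀ := by rw [← hsame i]; infer_instance
    have hmap : Measure.map (g i) ν₀ = ν₀ := by
      have h1 : Measure.map (Function.eval i) (Measure.map q (Measure.pi ν)) = ν i := by
        rw [hpres, map_eval_pi']
      rw [Measure.map_map (measurable_pi_apply i) hqm] at h1
      have h2 : (Function.eval i ∘ q) = (g i) ∘ (Function.eval (σ i)) := by
        funext x; exact hq x i
      rw [h2, ← Measure.map_map (hcont i).measurable (measurable_pi_apply (σ i)),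
        map_eval_pi', hsame, hsame] at h1
      exact h1
    exact one_dim (hmono i) ν₀ hsupp hmap
  refine ⟨hid, fun x => ?_⟩
  funext i
  rw [hq x i, hid i]
end
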